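/- Let a ∈ (−π/2, π/2) and let z₁, z₂ ∈ (−π/2, π/2) with z₁ < z₂, z₁ ≠ a and z₂ ≠ a. Then (√(1 + tan² z₁) − √(1 + tan² a))/(tan z₁ − tan a) < (√(1 + tan² z₂) − √(1 + tan² a))/(tan z₂ − tan a); i.e., the function f(z) = (√(1+tan²z) − √(1+tan²a))/(tan z − tan a) is strictly increasing on (−π/2, π/2) \ {a}. -/

import Mathlib

open Real

private lemma sq_pos_aux (x : ℝ) : (0:ℝ) < 1 + x ^ 2 := by positivity

private lemma hasDerivAt_sqrt_one_add_sq (x : ℝ) :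
    HasDerivAt (fun x : ℝ => Real.sqrt (1 + x ^ 2)) (x / Real.sqrt (1 + x ^ 2)) x := by
  have h : HasDerivAt (fun x : ℝ => 1 + x ^ 2) (2 * x) x := by
    simpa using ((hasDerivAt_pow 2 x).const_add 1)
  have hpos := sq_pos_aux x
  have := h.sqrt hpos.ne'
  convert this using 1
  have hs : Real.sqrt (1 + x ^ 2) ≠ 0 := (Real.sqrt_pos.mpr hpos).ne'
  field_simp

private lemma strictConvexOn_sqrt_one_add_sq :
    StrictConvexOn ℝ Set.univ (fun x : ℝ => Real.sqrt (1 + x ^ 2)) := by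
  apply strictConvexOn_univ_of_deriv2_pos
  · exact Real.continuous_sqrt.comp (by continuity)
  · intro x
    have hderiv : deriv (fun x : ℝ => Real.sqrt (1 + x ^ 2)) =
        fun x => x / Real.sqrt (1 + x ^ 2) :=
      funext fun y => (hasDerivAt_sqrt_one_add_sq y).deriv
    have hpos := sq_pos_aux x
    have hs : (0:ℝ) < Real.sqrt (1 + x ^ 2) := Real.sqrt_pos.mpr hpos
    have h2 : HasDerivAt (fun x : ℝ => x / Real.sqrt (1 + x ^ 2))
        ((1 * Real.sqrt (1 + x ^ 2) - x * (x / Real.sqrt (1 + x ^ 2))) /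
          Real.sqrt (1 + x ^ 2) ^ 2) x :=
      (hasDerivAt_id x).div (hasDerivAt_sqrt_one_add_sq x) hs.ne'
    have key : (0:ℝ) < (1 * Real.sqrt (1 + x ^ 2) - x * (x / Real.sqrt (1 + x ^ 2))) /
        Real.sqrt (1 + x ^ 2) ^ 2 := by
      have hsq : Real.sqrt (1 + x ^ 2) ^ 2 = 1 + x ^ 2 := Real.sq_sqrt hpos.le
      have hnum : 1 * Real.sqrt (1 + x ^ 2) - x * (x / Real.sqrt (1 + x ^ 2)) =
          1 / Real.sqrt (1 + x ^ 2) := by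
        field_simp
        nlinarith [hsq]
      rw [hnum]
      positivity
    simp only [Function.iterate_succ, Function.iterate_zero, Function.comp_apply, id]
    rw [hderiv]
    rw [h2.deriv]
    exact key

/-- **Lemma 2 (Appendix C).** The function `f(z) = (√(1+tan²z) - √(1+tan²a)) / (tan z - tan a)`
is strictly increasing on `(-π/2, π/2) \ {a}`. -/
theorem chord_slope_strict_mono (a z₁ z₂ : ℝ)
    (ha : a ∈ Set.Ioo (-(π / 2)) (π / 2))
    (hz₁ : z₁ ∈ Set.Ioo (-(π / 2)) (π / 2)) (hz₂ : z₂ ∈ Set.Ioo (-(π / 2)) (π / 2))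
    (hlt : z₁ < z₂) (hne₁ : z₁ ≠ a) (hne₂ : z₂ ≠ a) :
    (Real.sqrt (1 + Real.tan z₁ ^ 2) - Real.sqrt (1 + Real.tan a ^ 2)) /
        (Real.tan z₁ - Real.tan a) <
      (Real.sqrt (1 + Real.tan z₂ ^ 2) - Real.sqrt (1 + Real.tan a ^ 2)) /
        (Real.tan z₂ - Real.tan a) := by
  have htan : Real.tan z₁ < Real.tan z₂ := Real.strictMonoOn_tan hz₁ hz₂ hlt
  have hne₁' : Real.tan z₁ ≠ Real.tan a := fun h => hne₁ (Real.injOn_tan hz₁ ha h)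
  have hne₂' : Real.tan z₂ ≠ Real.tan a := fun h => hne₂ (Real.injOn_tan hz₂ ha h)
  exact strictConvexOn_sqrt_one_add_sq.secant_strict_mono (Set.mem_univ _)
    (Set.mem_univ _) (Set.mem_univ _) hne₁' hne₂' htan
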